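/- Let Y be a real symmetric n(m+1) × n(m+1) matrix partitioned into n×n blocks Y_{jk}, 0 ≤ j,k ≤ m. Then for every θ ∈ ℝ: Δ(θ) Y Δ(θ)ᴴ = D_0(Y) + ∑_{k=1}^{m} (Complex.exp(-i k θ) • D_k(Y) + Complex.exp(i k θ) • D_k(Y)ᵀ) (all real matrices coerced to ℂ). In particular θ ↦ Δ(θ) Y Δ(θ)ᴴ belongs to Q(n,m). -/

import Mathlib

open Matrix Complex Real
open scoped ComplexOrder

/-- The matrix pseudo-polynomial `θ ↦ Q₀ + ∑_{k=1}^m (e^{-ikθ} • Q_k + e^{ikθ} • Q_kᵀ)`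
with real coefficient matrices `Q 0, …, Q m`. -/
noncomputable def psiOf (n m : ℕ) (Q : Fin (m + 1) → Matrix (Fin n) (Fin n) ℝ) :
    ℝ → Matrix (Fin n) (Fin n) ℂ := fun θ =>
  (Q 0).map (Complex.ofReal) +
    ∑ k : Fin m,
      (Complex.exp (-(Complex.I * ((k.1 : ℂ) + 1) * (θ : ℂ))) •
          (Q k.succ).map Complex.ofReal +
        Complex.exp (Complex.I * ((k.1 : ℂ) + 1) * (θ : ℂ)) •
          ((Q k.succ)ᵀ).map Complex.ofReal)

/-- Membership in the class `Q(n,m)` of matrix pseudo-polynomials with real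
coefficients and symmetric constant coefficient. -/
def memQ (n m : ℕ) (Ψ : ℝ → Matrix (Fin n) (Fin n) ℂ) : Prop :=
  ∃ Q : Fin (m + 1) → Matrix (Fin n) (Fin n) ℝ,
    (Q 0).IsSymm ∧ ∀ θ : ℝ, Ψ θ = psiOf n m Q θ

/-- The normalized trace integral `T(Ψ) = (1/2π) ∫_{-π}^{π} Re tr Ψ(θ) dθ`. -/
noncomputable def traceInt (n : ℕ) (Ψ : ℝ → Matrix (Fin n) (Fin n) ℂ) : ℝ :=
  (1 / (2 * Real.pi)) * ∫ θ in (-Real.pi)..Real.pi, (Matrix.trace (Ψ θ)).re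

/-- The block-row shift matrix `Δ(θ) = [I_n, e^{iθ}I_n, …, e^{imθ}I_n]`, with the block
index `j ∈ Fin (m+1)` recorded as the first component of the column index. -/
noncomputable def Delta (n m : ℕ) (θ : ℝ) : Matrix (Fin n) (Fin (m + 1) × Fin n) ℂ :=
  Matrix.of fun a p =>
    Complex.exp (Complex.I * (p.1.1 : ℂ) * (θ : ℂ)) * (if a = p.2 then 1 else 0)

/-- The block-diagonal-sum operators: `D_k(Y) = ∑_{j=0}^{m-k} Y_{j, j+k}`, where `Y_{jk}`
denotes the `(j,k)` block of size `n × n` of `Y`. -/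
def Dop (n m : ℕ) (Y : Matrix (Fin (m + 1) × Fin n) (Fin (m + 1) × Fin n) ℝ)
    (k : Fin (m + 1)) : Matrix (Fin n) (Fin n) ℝ :=
  ∑ j : Fin (m + 1),
    if h : j.1 + k.1 ≤ m
      then Matrix.of fun a b => Y (j, a) (⟨j.1 + k.1, Nat.lt_succ_of_le h⟩, b)
      else 0

lemma sum_pairs {M : ℕ} (g : Fin (M+1) → Fin (M+1) → ℂ) :
    ∑ j, ∑ j', g j j'
      = ∑ j, g j j +
        ∑ k : Fin M, ∑ j : Fin (M+1),
          if h : j.1 + k.1 + 1 ≤ M then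
            g j ⟨j.1 + k.1 + 1, Nat.lt_succ_of_le h⟩ + g ⟨j.1 + k.1 + 1, Nat.lt_succ_of_le h⟩ j
          else 0 := by
  classical
  set e : ℕ → Fin (M+1) := fun t => ⟨min t M, Nat.lt_succ_of_le (Nat.min_le_right _ _)⟩ with he
  have hdite : ∀ (k : Fin M) (j : Fin (M+1)),
      (if h : j.1 + k.1 + 1 ≤ M then
          g j ⟨j.1 + k.1 + 1, Nat.lt_succ_of_le h⟩ + g ⟨j.1 + k.1 + 1, Nat.lt_succ_of_le h⟩ j
        else 0)
      = if j.1 + k.1 + 1 ≤ M then g j (e (j.1+k.1+1)) + g (e (j.1+k.1+1)) j else 0 := by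
    intro k j
    by_cases h : j.1 + k.1 + 1 ≤ M
    · simp only [dif_pos h, if_pos h]
      have : e (j.1+k.1+1) = ⟨j.1 + k.1 + 1, Nat.lt_succ_of_le h⟩ := by
        ext; simp [he, min_eq_left h]
      rw [this]
    · simp [h]
  -- three-way pointwise split
  have hsplit : ∀ p : Fin (M+1) × Fin (M+1),
      g p.1 p.2 = (if p.1 = p.2 then g p.1 p.2 else 0)
        + ((if p.1 < p.2 then g p.1 p.2 else 0) + (if p.2 < p.1 then g p.1 p.2 else 0)) := by
    intro p
    rcases lt_trichotomy p.1 p.2 with h | h | h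
    · simp [h, ne_of_lt h, not_lt_of_gt h, asymm h]
    · simp [h, lt_irrefl]
    · simp [h, (ne_of_lt h).symm, not_lt_of_gt h, asymm h]
  rw [← Fintype.sum_prod_type']
  calc ∑ p : Fin (M+1) × Fin (M+1), g p.1 p.2
      = ∑ p : Fin (M+1) × Fin (M+1), ((if p.1 = p.2 then g p.1 p.2 else 0)
        + ((if p.1 < p.2 then g p.1 p.2 else 0) + (if p.2 < p.1 then g p.1 p.2 else 0))) := by
        exact Finset.sum_congr rfl fun p _ => hsplit p
    _ = (∑ p : Fin (M+1) × Fin (M+1), if p.1 = p.2 then g p.1 p.2 else 0)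
        + ((∑ p : Fin (M+1) × Fin (M+1), if p.1 < p.2 then g p.1 p.2 else 0)
          + (∑ p : Fin (M+1) × Fin (M+1), if p.2 < p.1 then g p.1 p.2 else 0)) := by
        rw [Finset.sum_add_distrib, Finset.sum_add_distrib]
    _ = _ := by
        congr 1
        · rw [Fintype.sum_prod_type]
          simp
        · -- swap the third sum
          have hswap : (∑ p : Fin (M+1) × Fin (M+1), if p.2 < p.1 then g p.1 p.2 else 0)
              = ∑ p : Fin (M+1) × Fin (M+1), if p.1 < p.2 then g p.2 p.1 else 0 := by
            exact Finset.sum_equiv (Equiv.prodComm _ _) (by simp) (by intro p _; rfl)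
          rw [hswap, ← Finset.sum_add_distrib]
          have : ∀ p : Fin (M+1) × Fin (M+1),
              ((if p.1 < p.2 then g p.1 p.2 else 0) + (if p.1 < p.2 then g p.2 p.1 else 0))
                = if p.1 < p.2 then g p.1 p.2 + g p.2 p.1 else 0 := by
            intro p; split <;> simp
          rw [Finset.sum_congr rfl fun p _ => this p]
          -- now the bijection
          rw [show (∑ k : Fin M, ∑ j : Fin (M+1),
              if h : j.1 + k.1 + 1 ≤ M then
                g j ⟨j.1 + k.1 + 1, Nat.lt_succ_of_le h⟩ + g ⟨j.1 + k.1 + 1, Nat.lt_succ_of_le h⟩ j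
              else 0)
            = ∑ q : Fin M × Fin (M+1),
                if q.2.1 + q.1.1 + 1 ≤ M then g q.2 (e (q.2.1+q.1.1+1)) + g (e (q.2.1+q.1.1+1)) q.2 else 0 by
            rw [Fintype.sum_prod_type]
            exact Finset.sum_congr rfl fun k _ => Finset.sum_congr rfl fun j _ => hdite k j]
          rw [← Finset.sum_filter, ← Finset.sum_filter]
          refine Finset.sum_bij' (fun p hp => ((⟨p.2.1 - p.1.1 - 1, ?_⟩ : Fin M), p.1))
            (fun q hq => (q.2, e (q.2.1 + q.1.1 + 1))) ?_ ?_ ?_ ?_ ?_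
          · -- bound for the Fin M component
            simp only [Finset.mem_filter, Finset.mem_univ, true_and, Fin.lt_def] at hp
            have h2 := p.2.isLt
            omega
          · intro a ha
            simp only [Finset.mem_filter, Finset.mem_univ, true_and, Fin.lt_def] at ha ⊢
            have h2 := a.2.isLt
            omega
          · intro a ha
            simp only [Finset.mem_filter, Finset.mem_univ, true_and, Fin.lt_def, he] at ha ⊢
            omega
          · intro a ha
            obtain ⟨x, y⟩ := a
            simp only [Finset.mem_filter, Finset.mem_univ, true_and, Fin.lt_def] at ha
            have h2 := y.isLt
            simp only [Prod.mk.injEq, Fin.ext_iff, he]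
            exact ⟨trivial, by omega⟩
          · intro a ha
            obtain ⟨x, y⟩ := a
            simp only [Finset.mem_filter, Finset.mem_univ, true_and] at ha
            simp only [Prod.mk.injEq, Fin.ext_iff, he]
            exact ⟨by omega, trivial⟩
          · intro a ha
            obtain ⟨x, y⟩ := a
            simp only [Finset.mem_filter, Finset.mem_univ, true_and, Fin.lt_def] at ha
            have h2 := y.isLt
            have hxy : e (x.1 + (y.1 - x.1 - 1) + 1) = y := by
              simp only [Fin.ext_iff, he]; omega
            simp only [hxy]

lemma Dop_apply (n m : ℕ) (Y : Matrix (Fin (m + 1) × Fin n) (Fin (m + 1) × Fin n) ℝ)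
    (k : Fin (m + 1)) (a b : Fin n) :
    Dop n m Y k a b
      = ∑ j : Fin (m + 1),
          if h : j.1 + k.1 ≤ m then Y (j, a) (⟨j.1 + k.1, Nat.lt_succ_of_le h⟩, b) else 0 := by
  simp [Dop, Matrix.sum_apply, apply_dite (fun M : Matrix (Fin n) (Fin n) ℝ => M a b)]

lemma delta_entry (n m : ℕ) (Y : Matrix (Fin (m + 1) × Fin n) (Fin (m + 1) × Fin n) ℝ)
    (θ : ℝ) (a b : Fin n) :
    (Delta n m θ * Y.map Complex.ofReal * (Delta n m θ)ᴴ) a b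
    = ∑ j : Fin (m+1), ∑ j' : Fin (m+1),
        (Complex.exp (Complex.I * (j.1:ℂ) * θ) * Complex.exp (-(Complex.I * (j'.1:ℂ) * θ)))
          * (Y (j, a) (j', b) : ℂ) := by
  simp only [Matrix.mul_apply, Delta, Matrix.conjTranspose_apply, Matrix.of_apply,
    Matrix.map_apply, Fintype.sum_prod_type, mul_ite, ite_mul, mul_one, mul_zero, zero_mul,
    one_mul, Finset.sum_ite_eq, Finset.sum_ite_eq', Finset.mem_univ, if_true, star_mul',
    Finset.sum_mul, Finset.mul_sum]
  simp only [apply_ite (star : ℂ → ℂ), star_zero, Complex.star_def, mul_ite, mul_zero,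
    Finset.sum_ite_irrel, Finset.sum_ite_eq, Finset.mem_univ, if_true, ← Complex.exp_conj,
    _root_.map_mul, Complex.conj_I, Complex.conj_ofReal, map_natCast]
  simp only [Finset.sum_const_zero, Finset.sum_ite_irrel, Finset.sum_ite_eq, Finset.mem_univ,
    if_true]
  rw [Finset.sum_comm]
  apply Finset.sum_congr rfl
  intro j _
  apply Finset.sum_congr rfl
  intro j' _
  ring_nf


/-- For a real symmetric block matrix `Y`,
`Δ(θ) Y Δ(θ)ᴴ = D₀(Y) + ∑_{k=1}^m (e^{-ikθ} • D_k(Y) + e^{ikθ} • D_k(Y)ᵀ)` for all `θ`;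
in particular `θ ↦ Δ(θ) Y Δ(θ)ᴴ` belongs to `Q(n,m)`. -/
theorem delta_conj_eq_pseudoPolynomial
    (n m : ℕ) (hn : 0 < n) (hm : 0 < m)
    (Y : Matrix (Fin (m + 1) × Fin n) (Fin (m + 1) × Fin n) ℝ) (hY : Y.IsSymm) :
    (∀ θ : ℝ,
      Delta n m θ * Y.map Complex.ofReal * (Delta n m θ)ᴴ
        = (Dop n m Y 0).map Complex.ofReal +
            ∑ k : Fin m,
              (Complex.exp (-(Complex.I * ((k.1 : ℂ) + 1) * (θ : ℂ))) •
                  (Dop n m Y k.succ).map Complex.ofReal +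
                Complex.exp (Complex.I * ((k.1 : ℂ) + 1) * (θ : ℂ)) •
                  ((Dop n m Y k.succ)ᵀ).map Complex.ofReal)) ∧
    memQ n m (fun θ => Delta n m θ * Y.map Complex.ofReal * (Delta n m θ)ᴴ) := by
  have hYapp : ∀ p q, Y p q = Y q p := by
    intro p q
    conv_lhs => rw [← hY, Matrix.transpose_apply]
  have key : ∀ θ : ℝ,
      Delta n m θ * Y.map Complex.ofReal * (Delta n m θ)ᴴ
        = (Dop n m Y 0).map Complex.ofReal +
            ∑ k : Fin m,
              (Complex.exp (-(Complex.I * ((k.1 : ℂ) + 1) * (θ : ℂ))) •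
                  (Dop n m Y k.succ).map Complex.ofReal +
                Complex.exp (Complex.I * ((k.1 : ℂ) + 1) * (θ : ℂ)) •
                  ((Dop n m Y k.succ)ᵀ).map Complex.ofReal) := by
    intro θ
    ext a b
    rw [delta_entry n m Y θ a b]
    rw [sum_pairs (fun j j' =>
      (Complex.exp (Complex.I * (j.1:ℂ) * θ) * Complex.exp (-(Complex.I * (j'.1:ℂ) * θ)))
        * (Y (j, a) (j', b) : ℂ))]
    -- compute the RHS entry
    simp only [Matrix.add_apply, Matrix.sum_apply, Matrix.smul_apply, Matrix.map_apply,
      Matrix.transpose_apply, smul_eq_mul, Dop_apply]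
    congr 1
    · -- diagonal part
      rw [Complex.ofReal_sum]
      apply Finset.sum_congr rfl
      intro j _
      have h0 : j.1 + (0 : Fin (m+1)).1 ≤ m := by
        simpa using Nat.lt_succ_iff.mp j.2
      rw [dif_pos h0]
      have : (⟨j.1 + (0 : Fin (m+1)).1, Nat.lt_succ_of_le h0⟩ : Fin (m+1)) = j := by
        simp [Fin.ext_iff]
      rw [this]
      have he1 : Complex.exp (Complex.I * (j.1:ℂ) * θ) * Complex.exp (-(Complex.I * (j.1:ℂ) * θ)) = 1 := by
        rw [← Complex.exp_add]; simp
      rw [he1, one_mul]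
    · apply Finset.sum_congr rfl
      intro k _
      rw [Complex.ofReal_sum, Complex.ofReal_sum, Finset.mul_sum, Finset.mul_sum,
        ← Finset.sum_add_distrib]
      apply Finset.sum_congr rfl
      intro j _
      have hks : (k.succ : Fin (m+1)).1 = k.1 + 1 := rfl
      by_cases h : j.1 + k.1 + 1 ≤ m
      · have h' : j.1 + (k.succ : Fin (m+1)).1 ≤ m := by rw [hks]; omega
        rw [dif_pos h, dif_pos h', dif_pos h']
        have hfin : (⟨j.1 + (k.succ : Fin (m+1)).1, Nat.lt_succ_of_le h'⟩ : Fin (m+1))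
            = ⟨j.1 + k.1 + 1, Nat.lt_succ_of_le h⟩ := by
          simp [Fin.ext_iff, hks]; omega
        rw [hfin]
        have he2 : Complex.exp (Complex.I * (j.1:ℂ) * θ)
              * Complex.exp (-(Complex.I * ((⟨j.1 + k.1 + 1, Nat.lt_succ_of_le h⟩ : Fin (m+1)).1:ℂ) * θ))
            = Complex.exp (-(Complex.I * ((k.1 : ℂ) + 1) * θ)) := by
          rw [← Complex.exp_add]
          congr 1
          push_cast
          ring
        have he3 : Complex.exp (Complex.I * ((⟨j.1 + k.1 + 1, Nat.lt_succ_of_le h⟩ : Fin (m+1)).1:ℂ) * θ)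
              * Complex.exp (-(Complex.I * (j.1:ℂ) * θ))
            = Complex.exp (Complex.I * ((k.1 : ℂ) + 1) * θ) := by
          rw [← Complex.exp_add]
          congr 1
          push_cast
          ring
        rw [he2, he3]
        congr 2
        exact congrArg _ (hYapp _ _)
      · have h' : ¬ j.1 + (k.succ : Fin (m+1)).1 ≤ m := by rw [hks]; omega
        rw [dif_neg h, dif_neg h', dif_neg h']
        simp
  refine ⟨key, ⟨fun k => Dop n m Y k, ?_, fun θ => by
    show Delta n m θ * Y.map Complex.ofReal * (Delta n m θ)ᴴ = _
    rw [key θ]; rfl⟩⟩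
  -- symmetry of Dop Y 0
  ext a b
  show Dop n m Y 0 b a = Dop n m Y 0 a b
  rw [Dop_apply, Dop_apply]
  apply Finset.sum_congr rfl
  intro j _
  by_cases h : j.1 + (0 : Fin (m+1)).1 ≤ m
  · rw [dif_pos h, dif_pos h]
    have : (⟨j.1 + (0 : Fin (m+1)).1, Nat.lt_succ_of_le h⟩ : Fin (m+1)) = j := by
      simp [Fin.ext_iff]
    rw [this]
    exact hYapp _ _
  · rw [dif_neg h, dif_neg h]
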